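/- In the small-coupling setting (u ≡ 0, b̃_n = b⁰_n + t v_n), for every λ ∈ ℂ the coefficient of t¹ in the polynomial t ↦ J(λ,t) equals J_1(λ) = −(1/a⁰_0)·Σ_{k=0}^{p} v_k·(φ_q(λ)θ_k(λ)² + 2φ̂(λ)θ_k(λ)φ_k(λ) − θ_{q+1}(λ)φ_k(λ)²), i.e. ∂J/∂t(λ,0) = J_1(λ). -/

import Mathlib

open Polynomial Asymptotics Filter


lemma stmt14_wronskian {A B : ℤ → ℂ} {lam : ℂ} {G H : ℤ → ℂ}
    (hG : ∀ n : ℤ, A (n-1) * G (n-1) + A n * G (n+1) + B n * G n = lam * G n)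
    (hH : ∀ n : ℤ, A (n-1) * H (n-1) + A n * H (n+1) + B n * H n = lam * H n)
    (hG0 : G 0 = 1) (hG1 : G 1 = 0) (hH0 : H 0 = 0) (hH1 : H 1 = 1) :
    ∀ n : ℤ, 0 ≤ n → A n * (G n * H (n+1) - G (n+1) * H n) = A 0 := by
  have key : ∀ m : ℕ, A (m:ℤ) * (G (m:ℤ) * H ((m:ℤ)+1) - G ((m:ℤ)+1) * H (m:ℤ)) = A 0 := by
    intro m
    induction m with
    | zero => simp [hG0, hG1, hH0, hH1]
    | succ m ih =>
      have h1 := hG ((m:ℤ)+1); have h2 := hH ((m:ℤ)+1)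
      simp only [add_sub_cancel_right] at h1 h2
      push_cast
      push_cast at ih
      linear_combination ih - H ((m:ℤ)+1) * h1 + G ((m:ℤ)+1) * h2
  intro n hn
  have : n = ((n.toNat : ℕ) : ℤ) := by omega
  rw [this]
  exact key n.toNat


lemma stmt14_keyrec {A B : ℤ → ℂ} {lam : ℂ} {G H : ℤ → ℂ} {p : ℕ} {V K : ℤ → ℂ}
    (hA0 : A 0 ≠ 0)
    (hG : ∀ n : ℤ, A (n-1) * G (n-1) + A n * G (n+1) + B n * G n = lam * G n)
    (hH : ∀ n : ℤ, A (n-1) * H (n-1) + A n * H (n+1) + B n * H n = lam * H n)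
    (hW : ∀ n : ℤ, 0 ≤ n → A n * (G n * H (n+1) - G (n+1) * H n) = A 0)
    (hV : ∀ n : ℤ, (p:ℤ) < n → V n = 0)
    (D : ℤ → ℂ)
    (hD : ∀ m : ℤ, D m = -(1/(A 0)) *
      ∑ k ∈ Finset.Icc m (p:ℤ), V k * K k * (G m * H k - H m * G k)) :
    ∀ n : ℤ, 1 ≤ n → n ≤ (p:ℤ)+1 →
      A (n-1) * D (n-1) + A n * D (n+1) + B n * D n + V n * K n = lam * D n := by
  intro n hn1 hn2
  rcases eq_or_lt_of_le hn2 with hcase | hcase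
  · -- n = p + 1
    have hVn : V n = 0 := hV n (by omega)
    have hD0 : D n = 0 := by
      rw [hD, Finset.Icc_eq_empty (by omega : ¬ n ≤ (p:ℤ)), Finset.sum_empty, mul_zero]
    have hD1 : D (n+1) = 0 := by
      rw [hD, Finset.Icc_eq_empty (by omega : ¬ n+1 ≤ (p:ℤ)), Finset.sum_empty, mul_zero]
    have hD2 : D (n-1) = 0 := by
      rw [hD, show n - 1 = (p:ℤ) by omega, Finset.Icc_self, Finset.sum_singleton]; ring
    rw [hD0, hD1, hD2, hVn]; ring
  · -- n ≤ p
    have hnp : n ≤ (p:ℤ) := by omega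
    have e1 : Finset.Icc (n-1) (p:ℤ) = insert (n-1) (insert n (Finset.Icc (n+1) (p:ℤ))) := by
      ext x; simp only [Finset.mem_Icc, Finset.mem_insert]; omega
    have e2 : Finset.Icc n (p:ℤ) = insert n (Finset.Icc (n+1) (p:ℤ)) := by
      ext x; simp only [Finset.mem_Icc, Finset.mem_insert]; omega
    have m0 : (n-1) ∉ insert n (Finset.Icc (n+1) (p:ℤ)) := by
      simp only [Finset.mem_Icc, Finset.mem_insert]; omega
    have m2 : n ∉ Finset.Icc (n+1) (p:ℤ) := by
      simp only [Finset.mem_Icc]; omega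
    have hzero : A (n-1) * (∑ k ∈ Finset.Icc (n+1) (p:ℤ), V k * K k * (G (n-1) * H k - H (n-1) * G k))
        + A n * (∑ k ∈ Finset.Icc (n+1) (p:ℤ), V k * K k * (G (n+1) * H k - H (n+1) * G k))
        + (B n - lam) * (∑ k ∈ Finset.Icc (n+1) (p:ℤ), V k * K k * (G n * H k - H n * G k)) = 0 := by
      rw [Finset.mul_sum, Finset.mul_sum, Finset.mul_sum, ← Finset.sum_add_distrib,
        ← Finset.sum_add_distrib]
      refine Finset.sum_eq_zero fun k _ => ?_
      have h1 := hG n; have h2 := hH n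
      linear_combination (V k * K k * H k) * h1 - (V k * K k * G k) * h2
    have hWn := hW (n-1) (by omega)
    rw [show n - 1 + 1 = n by ring] at hWn
    have hinv : (1/(A 0)) * A 0 = 1 := one_div_mul_cancel hA0
    rw [hD (n-1), hD n, hD (n+1), e1, e2, Finset.sum_insert m0, Finset.sum_insert m2,
      Finset.sum_insert m2]
    linear_combination (-(1/(A 0))) * hzero + (-(1/(A 0)) * (V n * K n)) * hWn
      + (-(V n * K n)) * hinv

lemma stmt14_deriv {A B : ℤ → ℂ} {lam : ℂ} {G H K : ℤ → ℂ} {p : ℕ} {V : ℤ → ℂ}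
    (hA : ∀ n : ℤ, A n ≠ 0)
    (hG : ∀ n : ℤ, A (n-1) * G (n-1) + A n * G (n+1) + B n * G n = lam * G n)
    (hH : ∀ n : ℤ, A (n-1) * H (n-1) + A n * H (n+1) + B n * H n = lam * H n)
    (hK : ∀ n : ℤ, A (n-1) * K (n-1) + A n * K (n+1) + B n * K n = lam * K n)
    (hW : ∀ n : ℤ, 0 ≤ n → A n * (G n * H (n+1) - G (n+1) * H n) = A 0)
    (hV : ∀ n : ℤ, (p:ℤ) < n → V n = 0)
    (F : ℝ → ℤ → ℂ)
    (hF : ∀ (t : ℝ) (n : ℤ), A (n-1) * F t (n-1) + A n * F t (n+1)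
      + (B n + (t:ℂ) * V n) * F t n = lam * F t n)
    (hFbc : ∀ (t : ℝ) (n : ℤ), (p:ℤ) < n → F t n = K n)
    (D : ℤ → ℂ)
    (hD : ∀ m : ℤ, D m = -(1/(A 0)) *
      ∑ k ∈ Finset.Icc m (p:ℤ), V k * K k * (G m * H k - H m * G k)) :
    ∀ n : ℤ, 0 ≤ n → F 0 n = K n ∧ HasDerivAt (fun t : ℝ => F t n) (D n) 0 := by
  have key := stmt14_keyrec (hA 0) hG hH hW hV D hD
  have ho : HasDerivAt (fun t : ℝ => ((t : ℂ))) (1:ℂ) 0 := by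
    simpa using (hasDerivAt_id (0:ℝ)).ofReal_comp
  have main : ∀ m : ℕ, ∀ n : ℤ, (p:ℤ) + 1 - (m:ℤ) ≤ n → 0 ≤ n →
      F 0 n = K n ∧ HasDerivAt (fun t : ℝ => F t n) (D n) 0 := by
    intro m
    induction m with
    | zero =>
      intro n hn _
      have hpn : (p:ℤ) < n := by push_cast at hn; omega
      have hDn : D n = 0 := by
        rw [hD, Finset.Icc_eq_empty (by omega : ¬ n ≤ (p:ℤ)), Finset.sum_empty, mul_zero]
      have hfun : (fun t : ℝ => F t n) = fun _ => K n := funext fun t => hFbc t n hpn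
      exact ⟨hFbc 0 n hpn, by rw [hfun, hDn]; exact hasDerivAt_const 0 _⟩
    | succ m ih =>
      intro n hn hn0
      by_cases hcase : (p:ℤ) + 1 - (m:ℤ) ≤ n
      · exact ih n hcase hn0
      · push_cast at hn hcase
        have hnp : n ≤ (p:ℤ) := by omega
        obtain ⟨hval1, hder1⟩ := ih (n+1) (by omega) (by omega)
        obtain ⟨hval2, hder2⟩ := ih (n+2) (by omega) (by omega)
        -- express F t n from the recurrence at n+1
        have hFn : ∀ t : ℝ, F t n = (A n)⁻¹ *
            ((lam - B (n+1) - (t:ℂ) * V (n+1)) * F t (n+1) - A (n+1) * F t (n+2)) := by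
          intro t
          have h := hF t (n+1)
          rw [show n + 1 - 1 = n by ring] at h
          have h2 : A n * F t n = (lam - B (n+1) - (t:ℂ) * V (n+1)) * F t (n+1)
              - A (n+1) * F t (n+1+1) := by linear_combination h
          rw [show n + 1 + 1 = n + 2 by ring] at h2
          calc F t n = (A n)⁻¹ * (A n * F t n) := (inv_mul_cancel_left₀ (hA n) _).symm
          _ = _ := by rw [h2]
        have hK' := hK (n+1)
        rw [show n + 1 - 1 = n by ring, show n + 1 + 1 = n + 2 by ring] at hK'
        have hinv : (A n)⁻¹ * A n = 1 := inv_mul_cancel₀ (hA n)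
        have hval : F 0 n = K n := by
          rw [hFn 0, hval1, hval2]
          push_cast
          linear_combination (-(A n)⁻¹) * hK' + K n * hinv
        refine ⟨hval, ?_⟩
        have hfun : (fun t : ℝ => F t n) = fun t : ℝ => (A n)⁻¹ *
            ((lam - B (n+1) - (t:ℂ) * V (n+1)) * F t (n+1) - A (n+1) * F t (n+2)) :=
          funext hFn
        have hcoef : HasDerivAt (fun t : ℝ => lam - B (n+1) - (t:ℂ) * V (n+1))
            (0 - 1 * V (n+1)) 0 :=
          (hasDerivAt_const (0:ℝ) (lam - B (n+1))).sub (ho.mul_const (V (n+1)))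
        have hprod := hcoef.mul hder1
        have hbig := ((hprod.sub (hder2.const_mul (A (n+1)))).const_mul ((A n)⁻¹))
        rw [hfun]
        convert hbig using 1
        case e'_4 => rfl
        case e'_8 => rfl
        rw [hval1]
        have hkey := key (n+1) (by omega) (by omega)
        rw [show n + 1 - 1 = n by ring, show n + 1 + 1 = n + 2 by ring] at hkey
        push_cast
        linear_combination ((A n)⁻¹) * hkey + (-(D n)) * hinv
  intro n hn0
  exact main (p+1) n (by push_cast; omega) hn0

theorem stmt14
    (q : ℕ) (hq : 1 ≤ q)
    (a b : ℤ → ℝ)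
    (ha_per : ∀ n : ℤ, a (n + (q : ℤ)) = a n)
    (hb_per : ∀ n : ℤ, b (n + (q : ℤ)) = b n)
    (ha_pos : ∀ n : ℤ, 0 < a n)
    (θ φ : ℤ → Polynomial ℝ)
    (hθ_rec : ∀ n : ℤ,
      C (a (n - 1)) * θ (n - 1) + C (a n) * θ (n + 1) + C (b n) * θ n = X * θ n)
    (hφ_rec : ∀ n : ℤ,
      C (a (n - 1)) * φ (n - 1) + C (a n) * φ (n + 1) + C (b n) * φ n = X * φ n)
    (hθ0 : θ 0 = 1) (hθ1 : θ 1 = 0) (hφ0 : φ 0 = 0) (hφ1 : φ 1 = 1)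
    (Δl : Polynomial ℝ) (hΔl : Δl = C ((2:ℝ)⁻¹) * (φ ((q:ℤ) + 1) + θ (q:ℤ)))
    (φh : Polynomial ℝ) (hφh : φh = C ((2:ℝ)⁻¹) * (φ ((q:ℤ) + 1) - θ (q:ℤ)))
    (p : ℕ) (hp : 1 ≤ p)
    (v : ℤ → ℝ)
    (hv_supp : ∀ n : ℤ, (n < 0 ∨ (p:ℤ) < n) → v n = 0)
    (hv0 : v 0 ≠ 0) (hvp : v (p:ℤ) ≠ 0)
    (θt φt : ℝ → ℤ → Polynomial ℝ)
    (hθt_rec : ∀ (t : ℝ) (n : ℤ),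
      C (a (n - 1)) * θt t (n - 1) + C (a n) * θt t (n + 1)
        + C (b n + t * v n) * θt t n = X * θt t n)
    (hφt_rec : ∀ (t : ℝ) (n : ℤ),
      C (a (n - 1)) * φt t (n - 1) + C (a n) * φt t (n + 1)
        + C (b n + t * v n) * φt t n = X * φt t n)
    (hθt_bc : ∀ (t : ℝ) (n : ℤ), (p:ℤ) < n → θt t n = θ n)
    (hφt_bc : ∀ (t : ℝ) (n : ℤ), (p:ℤ) < n → φt t n = φ n)
    (Jf : ℂ → ℝ → ℂ)
    (hJf : ∀ (lam : ℂ) (t : ℝ), Jf lam t = -(aeval lam (φ (q:ℤ)) * aeval lam (θt t 1)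
      + aeval lam φh * (aeval lam (φt t 1) - aeval lam (θt t 0))
      + ((t * v 0 / a 0 : ℝ) : ℂ)
        * (aeval lam (φ (q:ℤ)) * aeval lam (θt t 0) + aeval lam φh * aeval lam (φt t 0))
      + aeval lam (θ ((q:ℤ) + 1)) * aeval lam (φt t 0))) :
    ∀ lam : ℂ, HasDerivAt (fun t : ℝ => Jf lam t)
      (-(1 / (a 0 : ℂ)) * ∑ k ∈ Finset.range (p + 1), (v (k : ℤ) : ℂ) *
        (aeval lam (φ (q:ℤ)) * (aeval lam (θ (k:ℤ))) ^ 2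
          + 2 * aeval lam φh * aeval lam (θ (k:ℤ)) * aeval lam (φ (k:ℤ))
          - aeval lam (θ ((q:ℤ) + 1)) * (aeval lam (φ (k:ℤ))) ^ 2)) 0 := by
  intro lam
  have hA : ∀ n : ℤ, ((a n : ℝ) : ℂ) ≠ 0 := fun n => by
    exact_mod_cast (ha_pos n).ne'
  set G : ℤ → ℂ := fun n => aeval lam (θ n) with hGdef
  set Hf : ℤ → ℂ := fun n => aeval lam (φ n) with hHdef
  have hGrec : ∀ n : ℤ, ((a (n-1) : ℝ):ℂ) * G (n-1) + ((a n : ℝ):ℂ) * G (n+1)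
      + ((b n : ℝ):ℂ) * G n = lam * G n := by
    intro n
    have h := congrArg (aeval lam) (hθ_rec n)
    simp only [map_add, map_mul, aeval_C, aeval_X, Complex.coe_algebraMap, hGdef] at h ⊢
    exact h
  have hHrec : ∀ n : ℤ, ((a (n-1) : ℝ):ℂ) * Hf (n-1) + ((a n : ℝ):ℂ) * Hf (n+1)
      + ((b n : ℝ):ℂ) * Hf n = lam * Hf n := by
    intro n
    have h := congrArg (aeval lam) (hφ_rec n)
    simp only [map_add, map_mul, aeval_C, aeval_X, Complex.coe_algebraMap, hHdef] at h ⊢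
    exact h
  have hG0 : G 0 = 1 := by simp [hGdef, hθ0]
  have hG1 : G 1 = 0 := by simp [hGdef, hθ1]
  have hH0 : Hf 0 = 0 := by simp [hHdef, hφ0]
  have hH1 : Hf 1 = 1 := by simp [hHdef, hφ1]
  have hW := stmt14_wronskian (A := fun n => ((a n : ℝ):ℂ)) (B := fun n => ((b n : ℝ):ℂ)) hGrec hHrec hG0 hG1 hH0 hH1
  have hVz : ∀ n : ℤ, (p:ℤ) < n → ((v n : ℝ):ℂ) = 0 := fun n h => by
    rw [hv_supp n (Or.inr h)]; simp
  set Fθ : ℝ → ℤ → ℂ := fun t n => aeval lam (θt t n) with hFθdef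
  set Fφ : ℝ → ℤ → ℂ := fun t n => aeval lam (φt t n) with hFφdef
  have hFθrec : ∀ (t : ℝ) (n : ℤ), ((a (n-1) : ℝ):ℂ) * Fθ t (n-1) + ((a n : ℝ):ℂ) * Fθ t (n+1)
      + (((b n : ℝ):ℂ) + (t:ℂ) * ((v n : ℝ):ℂ)) * Fθ t n = lam * Fθ t n := by
    intro t n
    have h := congrArg (aeval lam) (hθt_rec t n)
    simp only [map_add, map_mul, aeval_C, aeval_X, Complex.coe_algebraMap, hFθdef] at h ⊢
    push_cast at h
    linear_combination h
  have hFφrec : ∀ (t : ℝ) (n : ℤ), ((a (n-1) : ℝ):ℂ) * Fφ t (n-1) + ((a n : ℝ):ℂ) * Fφ t (n+1)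
      + (((b n : ℝ):ℂ) + (t:ℂ) * ((v n : ℝ):ℂ)) * Fφ t n = lam * Fφ t n := by
    intro t n
    have h := congrArg (aeval lam) (hφt_rec t n)
    simp only [map_add, map_mul, aeval_C, aeval_X, Complex.coe_algebraMap, hFφdef] at h ⊢
    push_cast at h
    linear_combination h
  have hFθbc : ∀ (t : ℝ) (n : ℤ), (p:ℤ) < n → Fθ t n = G n := fun t n h => by
    simp only [hFθdef, hGdef]; rw [hθt_bc t n h]
  have hFφbc : ∀ (t : ℝ) (n : ℤ), (p:ℤ) < n → Fφ t n = Hf n := fun t n h => by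
    simp only [hFφdef, hHdef]; rw [hφt_bc t n h]
  set Dθ : ℤ → ℂ := fun m => -(1/((a 0 : ℝ):ℂ)) *
      ∑ k ∈ Finset.Icc m (p:ℤ), ((v k : ℝ):ℂ) * G k * (G m * Hf k - Hf m * G k) with hDθdef
  set Dφ : ℤ → ℂ := fun m => -(1/((a 0 : ℝ):ℂ)) *
      ∑ k ∈ Finset.Icc m (p:ℤ), ((v k : ℝ):ℂ) * Hf k * (G m * Hf k - Hf m * G k) with hDφdef
  have outθ := stmt14_deriv (A := fun n => ((a n : ℝ):ℂ)) (B := fun n => ((b n : ℝ):ℂ))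
    (V := fun n => ((v n : ℝ):ℂ)) hA hGrec hHrec hGrec hW hVz Fθ hFθrec hFθbc Dθ
    (fun m => by simp only [hDθdef])
  have outφ := stmt14_deriv (A := fun n => ((a n : ℝ):ℂ)) (B := fun n => ((b n : ℝ):ℂ))
    (V := fun n => ((v n : ℝ):ℂ)) hA hGrec hHrec hHrec hW hVz Fφ hFφrec hFφbc Dφ
    (fun m => by simp only [hDφdef])
  obtain ⟨hθ0val, hθ0der⟩ := outθ 0 le_rfl
  obtain ⟨hθ1val, hθ1der⟩ := outθ 1 (by norm_num)
  obtain ⟨hφ0val, hφ0der⟩ := outφ 0 le_rfl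
  obtain ⟨hφ1val, hφ1der⟩ := outφ 1 (by norm_num)
  set P : ℂ := aeval lam (φ (q:ℤ)) with hPdef
  set Q : ℂ := aeval lam φh with hQdef
  set R : ℂ := aeval lam (θ ((q:ℤ)+1)) with hRdef
  have ho : HasDerivAt (fun t : ℝ => ((t : ℂ))) (1:ℂ) 0 := by
    simpa using (hasDerivAt_id (0:ℝ)).ofReal_comp
  have hJfun : (fun t : ℝ => Jf lam t) = fun t : ℝ =>
      -(P * Fθ t 1 + Q * (Fφ t 1 - Fθ t 0)
        + ((t:ℂ) * ((v 0 : ℝ):ℂ) / ((a 0 : ℝ):ℂ)) * (P * Fθ t 0 + Q * Fφ t 0)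
        + R * Fφ t 0) := by
    funext t
    rw [hJf lam t]
    simp only [hFθdef, hFφdef, hPdef, hQdef, hRdef]
    push_cast
    ring
  have hcoef : HasDerivAt (fun t : ℝ => (t:ℂ) * ((v 0 : ℝ):ℂ) / ((a 0 : ℝ):ℂ))
      (((v 0 : ℝ):ℂ) / ((a 0 : ℝ):ℂ)) 0 := by
    simpa using (ho.mul_const ((v 0 : ℝ):ℂ)).div_const ((a 0 : ℝ):ℂ)
  have d1 := hθ1der.const_mul P
  have d2 := (hφ1der.sub hθ0der).const_mul Q
  have d3 := (hθ0der.const_mul P).add (hφ0der.const_mul Q)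
  have d4 := hcoef.mul d3
  have d5 := hφ0der.const_mul R
  have dtot := (((d1.add d2).add d4).add d5).neg
  rw [hJfun]
  convert dtot using 1
  all_goals try rfl
  simp only [hθ0val, hφ0val, hG0, hH0, Complex.ofReal_zero, zero_mul, mul_zero, zero_div,
    mul_one, add_zero, zero_add, Pi.add_apply]
  have m1 : (0:ℤ) ∉ Finset.Icc (1:ℤ) (p:ℤ) := by simp
  have esplit : Finset.Icc (0:ℤ) (p:ℤ) = insert 0 (Finset.Icc 1 (p:ℤ)) := by
    ext x; simp only [Finset.mem_Icc, Finset.mem_insert]; omega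
  set X := ∑ k ∈ Finset.Icc (1:ℤ) (p:ℤ), ((v k : ℝ):ℂ) * G k^2 with hXdef
  set Y := ∑ k ∈ Finset.Icc (1:ℤ) (p:ℤ), ((v k : ℝ):ℂ) * G k * Hf k with hYdef
  set Z := ∑ k ∈ Finset.Icc (1:ℤ) (p:ℤ), ((v k : ℝ):ℂ) * Hf k^2 with hZdef
  have s1 : Dθ 1 = (1/((a 0 : ℝ):ℂ)) * X := by
    simp only [hDθdef, hXdef]
    have h : ∀ k ∈ Finset.Icc (1:ℤ) (p:ℤ),
        ((v k : ℝ):ℂ) * G k * (G 1 * Hf k - Hf 1 * G k) = -(((v k : ℝ):ℂ) * G k^2) :=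
      fun k _ => by rw [hG1, hH1]; ring
    rw [Finset.sum_congr rfl h, Finset.sum_neg_distrib]; ring
  have s2 : Dφ 1 = (1/((a 0 : ℝ):ℂ)) * Y := by
    simp only [hDφdef, hYdef]
    have h : ∀ k ∈ Finset.Icc (1:ℤ) (p:ℤ),
        ((v k : ℝ):ℂ) * Hf k * (G 1 * Hf k - Hf 1 * G k) = -(((v k : ℝ):ℂ) * G k * Hf k) :=
      fun k _ => by rw [hG1, hH1]; ring
    rw [Finset.sum_congr rfl h, Finset.sum_neg_distrib]; ring
  have s3 : Dθ 0 = -(1/((a 0 : ℝ):ℂ)) * Y := by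
    simp only [hDθdef, hYdef]
    rw [esplit, Finset.sum_insert m1]
    have h0 : ((v (0:ℤ) : ℝ):ℂ) * G 0 * (G 0 * Hf 0 - Hf 0 * G 0) = 0 := by ring
    have h : ∀ k ∈ Finset.Icc (1:ℤ) (p:ℤ),
        ((v k : ℝ):ℂ) * G k * (G 0 * Hf k - Hf 0 * G k) = ((v k : ℝ):ℂ) * G k * Hf k :=
      fun k _ => by rw [hG0, hH0]; ring
    rw [h0, Finset.sum_congr rfl h, zero_add]
  have s4 : Dφ 0 = -(1/((a 0 : ℝ):ℂ)) * Z := by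
    simp only [hDφdef, hZdef]
    rw [esplit, Finset.sum_insert m1]
    have h0 : ((v (0:ℤ) : ℝ):ℂ) * Hf 0 * (G 0 * Hf 0 - Hf 0 * G 0) = 0 := by ring
    have h : ∀ k ∈ Finset.Icc (1:ℤ) (p:ℤ),
        ((v k : ℝ):ℂ) * Hf k * (G 0 * Hf k - Hf 0 * G k) = ((v k : ℝ):ℂ) * Hf k^2 :=
      fun k _ => by rw [hG0, hH0]; ring
    rw [h0, Finset.sum_congr rfl h, zero_add]
  have hmap : Finset.Icc (0:ℤ) (p:ℤ)
      = (Finset.range (p+1)).map ⟨(Nat.cast : ℕ → ℤ), Nat.cast_injective⟩ := by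
    ext x
    simp only [Finset.mem_Icc, Finset.mem_map, Finset.mem_range, Function.Embedding.coeFn_mk]
    constructor
    · rintro ⟨h0, hp'⟩; exact ⟨x.toNat, by omega, by omega⟩
    · rintro ⟨k, hk, rfl⟩; omega
  have e0 : ∑ k ∈ Finset.range (p + 1), ((v (k:ℤ) : ℝ):ℂ) *
        (P * (aeval lam (θ (k:ℤ)))^2 + 2 * Q * aeval lam (θ (k:ℤ)) * aeval lam (φ (k:ℤ))
          - R * (aeval lam (φ (k:ℤ)))^2)
      = ((v (0:ℤ) : ℝ):ℂ) * P + (P * X + 2*Q*Y - R*Z) := by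
    have h1 : ∑ k ∈ Finset.range (p + 1), ((v (k:ℤ) : ℝ):ℂ) *
          (P * (aeval lam (θ (k:ℤ)))^2 + 2 * Q * aeval lam (θ (k:ℤ)) * aeval lam (φ (k:ℤ))
            - R * (aeval lam (φ (k:ℤ)))^2)
        = ∑ k ∈ Finset.Icc (0:ℤ) (p:ℤ), ((v k : ℝ):ℂ) *
          (P * (aeval lam (θ k))^2 + 2 * Q * aeval lam (θ k) * aeval lam (φ k)
            - R * (aeval lam (φ k))^2) := by
      rw [hmap, Finset.sum_map]
      simp only [Function.Embedding.coeFn_mk]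
    rw [h1, esplit, Finset.sum_insert m1]
    congr 1
    · rw [hθ0, hφ0]; simp only [map_one, map_zero]; ring
    · have h2 : ∀ k ∈ Finset.Icc (1:ℤ) (p:ℤ), ((v k : ℝ):ℂ) *
          (P * (aeval lam (θ k))^2 + 2 * Q * aeval lam (θ k) * aeval lam (φ k)
            - R * (aeval lam (φ k))^2)
          = P * (((v k : ℝ):ℂ) * (aeval lam (θ k))^2)
            + 2*Q * (((v k : ℝ):ℂ) * aeval lam (θ k) * aeval lam (φ k))
            - R * (((v k : ℝ):ℂ) * (aeval lam (φ k))^2) := fun k _ => by ring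
      rw [Finset.sum_congr rfl h2, Finset.sum_sub_distrib, Finset.sum_add_distrib,
        ← Finset.mul_sum, ← Finset.mul_sum, ← Finset.mul_sum]
  linear_combination (-(1/((a 0 : ℝ):ℂ))) * e0 + P * s1 + Q * s2 + (-Q) * s3 + R * s4
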